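/- Let W ∈ ℝ^{m×r} have columns of unit ℓ₁-norm, and let α be the minimum over i of the ℓ₁-distance from wᵢ to the convex hull of the other columns of W. Then σ_r(W) ≤ α. -/

import Mathlib

/-- The smallest singular value of the matrix with columns `w i`. -/
noncomputable def sigmaMinE {m r : ℕ} (w : Fin r → EuclideanSpace ℝ (Fin m)) : ℝ :=
  ⨅ x : {x : Fin r → ℝ // ∑ i, x i ^ 2 = 1}, ‖∑ i, x.1 i • w i‖

lemma euclid_norm_le_l1 {m : ℕ} (u : EuclideanSpace ℝ (Fin m)) :
    ‖u‖ ≤ ∑ a, |u a| := by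
  rw [EuclideanSpace.norm_eq]
  have h : ∑ a, ‖u a‖ ^ 2 ≤ (∑ a, ‖u a‖) ^ 2 :=
    Finset.sum_sq_le_sq_sum_of_nonneg (fun _ _ => norm_nonneg _)
  calc Real.sqrt (∑ a, ‖u a‖ ^ 2) ≤ Real.sqrt ((∑ a, ‖u a‖) ^ 2) :=
        Real.sqrt_le_sqrt h
    _ = ∑ a, ‖u a‖ := Real.sqrt_sq (Finset.sum_nonneg fun _ _ => norm_nonneg _)
    _ = ∑ a, |u a| := by simp [Real.norm_eq_abs]

/-- if the columns of `W` have unit `ℓ₁`-norm and `α` is the minimum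
`ℓ₁`-distance from a column of `W` to the convex hull of the other columns, then
`σ_r(W) ≤ α`. -/
theorem stmt_13 (m r : ℕ) (hr : 2 ≤ r)
    (w : Fin r → EuclideanSpace ℝ (Fin m))
    (hl1 : ∀ i, ∑ a, |w i a| = 1)
    (α : ℝ)
    (hα : α = ⨅ i : Fin r,
      ⨅ θ : {θ : Fin r → ℝ // (∀ j, 0 ≤ θ j) ∧ θ i = 0 ∧ ∑ j, θ j = 1},
        ∑ a, |w i a - ∑ j, θ.1 j * w j a|) :
    sigmaMinE w ≤ α := by
  subst hα
  have hrpos : 0 < r := by omega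
  haveI : Nonempty (Fin r) := ⟨⟨0, hrpos⟩⟩
  apply le_ciInf
  intro i
  -- nonempty instance for the inner index type
  haveI : Nontrivial (Fin r) := Fin.nontrivial_iff_two_le.mpr hr
  obtain ⟨j, hj⟩ : ∃ j : Fin r, j ≠ i := exists_ne i
  haveI : Nonempty {θ : Fin r → ℝ // (∀ k, 0 ≤ θ k) ∧ θ i = 0 ∧ ∑ k, θ k = 1} := by
    refine ⟨⟨fun k => if k = j then 1 else 0, fun k => by positivity, ?_, ?_⟩⟩
    · simp [hj.symm]
    · simp
  apply le_ciInf
  rintro ⟨θ, hθ0, hθi, hθs⟩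
  simp only
  -- coefficient vector
  set v : Fin r → ℝ := fun k => (if k = i then 1 else 0) - θ k with hv
  have hvi : v i = 1 := by simp [hv, hθi]
  have hs1 : 1 ≤ ∑ k, v k ^ 2 := by
    calc (1:ℝ) = v i ^ 2 := by rw [hvi]; ring
    _ ≤ ∑ k, v k ^ 2 := Finset.single_le_sum (f := fun k => v k ^ 2) (fun k _ => sq_nonneg _) (Finset.mem_univ i)
  have hspos : 0 < ∑ k, v k ^ 2 := lt_of_lt_of_le one_pos hs1
  set s : ℝ := Real.sqrt (∑ k, v k ^ 2) with hsdef
  have hs0 : 0 < s := Real.sqrt_pos.2 hspos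
  have hs1' : 1 ≤ s := by
    rw [hsdef, show (1:ℝ) = Real.sqrt 1 by simp]
    exact Real.sqrt_le_sqrt hs1
  set x : Fin r → ℝ := fun k => v k / s with hx
  have hxnorm : ∑ k, x k ^ 2 = 1 := by
    simp only [hx, div_pow]
    rw [← Finset.sum_div, hsdef, Real.sq_sqrt hspos.le, div_self hspos.ne']
  have hsum : ∑ k, x k • w k = (s⁻¹) • ∑ k, v k • w k := by
    rw [Finset.smul_sum]
    refine Finset.sum_congr rfl fun k _ => ?_
    rw [smul_smul]
    congr 1
    simp [hx, div_eq_inv_mul]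
  have key : sigmaMinE w ≤ ‖∑ k, x k • w k‖ := by
    exact ciInf_le ⟨0, fun y ⟨z, hz⟩ => hz ▸ norm_nonneg _⟩ (⟨x, hxnorm⟩ :
      {x : Fin r → ℝ // ∑ i, x i ^ 2 = 1})
  have hnorm_le : ‖∑ k, x k • w k‖ ≤ ‖∑ k, v k • w k‖ := by
    rw [hsum, norm_smul]
    have : ‖s⁻¹‖ ≤ 1 := by
      rw [Real.norm_eq_abs, abs_inv, abs_of_pos hs0]
      exact inv_le_one_of_one_le₀ hs1'
    calc ‖s⁻¹‖ * ‖∑ k, v k • w k‖ ≤ 1 * ‖∑ k, v k • w k‖ :=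
          mul_le_mul_of_nonneg_right this (norm_nonneg _)
      _ = _ := one_mul _
  have hvw : ∑ k, v k • w k = w i - ∑ k, θ k • w k := by
    simp only [hv, sub_smul, Finset.sum_sub_distrib, ite_smul, one_smul, zero_smul]
    rw [Finset.sum_ite_eq' Finset.univ i (fun k => w k)]
    simp
  have hfinal : ‖∑ k, v k • w k‖ ≤ ∑ a, |w i a - ∑ k, θ k * w k a| := by
    rw [hvw]
    have := euclid_norm_le_l1 (w i - ∑ k, θ k • w k)
    refine this.trans_eq (Finset.sum_congr rfl fun a _ => ?_)
    have hsa : (∑ k, θ k • w k) a = ∑ k, θ k * w k a := by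
      simp [WithLp.ofLp_sum, Finset.sum_apply]
    simp [hsa]
  calc sigmaMinE w ≤ ‖∑ k, x k • w k‖ := key
    _ ≤ ‖∑ k, v k • w k‖ := hnorm_le
    _ ≤ _ := hfinal
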